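/- Let either G = (V,E) be a finite connected regular simple graph and A ⊆ V, or G = 𝒯_{d,n} and A ⊆ ℒ. For a,b ∈ V and t ∈ ℕ set e_{a,b}(t) := Σ_{i=0}^t p^i(a,b). Then for every s > 0 and every t ∈ ℕ there exists a subset B_s ⊆ A such that |B_s| ≥ |A|/(1 + s t²) and max_{a,b ∈ B_s, a≠b} Pr_a[T_b < t] ≤ max_{a,b ∈ B_s, a≠b} e_{a,b}(t) < 1/(st). -/

import Mathlib

open Finset Filter
open scoped Classical

namespace FrogFormal

/-! ### Simple random walk on a finite graph -/

variable {V : Type*} [Fintype V]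

/-- The degree of a vertex. -/
noncomputable def deg (G : SimpleGraph V) (x : V) : ℕ :=
  (Finset.univ.filter fun y => G.Adj x y).card

/-- One-step transition probability of simple random walk on `G`. -/
noncomputable def step (G : SimpleGraph V) (x y : V) : ℝ :=
  if G.Adj x y then (1 : ℝ) / (deg G x) else 0

/-- Extend a finite path to an infinite one by freezing it at its final state. -/
def extp {S : Type*} {t : ℕ} (γ : Fin (t + 1) → S) : ℕ → S :=
  fun i => γ ⟨min i t, by omega⟩

/-- The probability, for the Markov chain on the finite state space `S` with transition
kernel `K` started at `x`, of the event `E`, where the trajectory is frozen after time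
`t`.  For every event `E` which is determined by the first `t` steps of the chain, this
is exactly the probability of `E`. -/
noncomputable def chainProb {S : Type*} [Fintype S] (K : S → S → ℝ) (x : S) (t : ℕ)
    (E : Set (ℕ → S)) : ℝ :=
  ∑ ω : Fin (t + 1) → S,
    if ω 0 = x ∧ extp ω ∈ E then ∏ i ∈ Finset.range t, K (extp ω i) (extp ω (i + 1)) else 0

/-- The probability of an event for simple random walk on `G` started at `x`
(trajectory frozen after time `t`). -/
noncomputable def walkProb (G : SimpleGraph V) (x : V) (t : ℕ) (E : Set (ℕ → V)) : ℝ :=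
  chainProb (step G) x t E

/-- The `t`-step transition probability of SRW on `G`. -/
noncomputable def pStep (G : SimpleGraph V) (t : ℕ) (u v : V) : ℝ :=
  walkProb G u t {γ | γ t = v}

/-! ### The frog model -/

/-- Particle counts: the Poisson counts `η`, plus one planted particle at the origin `o`
(the planted particle at `o` is the one of largest index there). -/
noncomputable def cnt (o : V) (η : V → ℕ) (v : V) : ℕ := η v + if v = o then 1 else 0

/-- The Poisson weight `e^{-λ} λ^k / k!`. -/
noncomputable def poisW (lam : ℝ) (k : ℕ) : ℝ :=
  Real.exp (-lam) * lam ^ k / (Nat.factorial k)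

/-- The weight of a length-`T` simple-random-walk path of a particle starting at `v`. -/
noncomputable def pathWt (G : SimpleGraph V) (v : V) {T : ℕ} (γ : Fin (T + 1) → V) : ℝ :=
  if γ 0 = v then ∏ i ∈ Finset.range T, step G (extp γ i) (extp γ (i + 1)) else 0

/-- Embed the (finitely many) truncated particle paths into total path data; the
irrelevant unused particle indices are assigned the path sitting at their vertex. -/
noncomputable def embed (o : V) (η : V → ℕ) {T : ℕ}
    (w : (v : V) → Fin (cnt o η v) → (Fin (T + 1) → V)) : V → ℕ → ℕ → V :=
  fun v i j => if h : i < cnt o η v then extp (w v ⟨i, h⟩) j else v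

/-- The probability, under the frog model on `G` with particle density `lam` and origin
`o`, of the event `E`.  `E` is a predicate of the particle counts (including the planted
particle at `o`) and of the infinite walks picked by the particles; the walks are frozen
after time `T`, so that this is the probability of `E` for every event `E` which is
determined by the first `T` steps of the walks picked by the particles. -/
noncomputable def frogProb (G : SimpleGraph V) (o : V) (lam : ℝ) (T : ℕ)
    (E : (V → ℕ) → (V → ℕ → ℕ → V) → Prop) : ℝ :=
  ∑' η : V → ℕ,
    (∏ v, poisW lam (η v)) *
      ∑ w : (v : V) → Fin (cnt o η v) → (Fin (T + 1) → V),
        (∏ v, ∏ i, pathWt G v (w v i)) * (if E (cnt o η) (embed o η w) then 1 else 0)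

/-- The expectation, under the frog model, of a functional `X` of the particle counts and
of the walks picked by the particles (frozen after time `T`). -/
noncomputable def frogExp (G : SimpleGraph V) (o : V) (lam : ℝ) (T : ℕ)
    (X : (V → ℕ) → (V → ℕ → ℕ → V) → ℝ) : ℝ :=
  ∑' η : V → ℕ,
    (∏ v, poisW lam (η v)) *
      ∑ w : (v : V) → Fin (cnt o η v) → (Fin (T + 1) → V),
        (∏ v, ∏ i, pathWt G v (w v i)) * X (cnt o η) (embed o η w)

/-- Probability for a system of independent particles (with no planted particle), with
`Pois (rate v)` particles at each vertex `v`, walks frozen after time `T`. -/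
noncomputable def indepProb (G : SimpleGraph V) (rate : V → ℝ) (T : ℕ)
    (E : (V → ℕ) → (V → ℕ → ℕ → V) → Prop) : ℝ :=
  ∑' η : V → ℕ,
    (∏ v, poisW (rate v) (η v)) *
      ∑ w : (v : V) → Fin (η v) → (Fin (T + 1) → V),
        (∏ v, ∏ i, pathWt G v (w v i)) *
          (if E η (fun v i j => if h : i < η v then extp (w v ⟨i, h⟩) j else v) then 1 else 0)

/-- `ℓ_τ(x,y)`: the minimal `j ≤ τ` such that some particle initially at `x` visits `y`
at step `j` of the walk it picked (`⊤` if there is none).  Here `c v` is the number of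
particles initially at `v` and `w v i` is the walk picked by the `i`-th particle at `v`. -/
noncomputable def ell {V : Type*} (c : V → ℕ) (w : V → ℕ → ℕ → V) (τ : ℕ∞) (x y : V) : ℕ∞ :=
  sInf {j : ℕ∞ | ∃ jn : ℕ, j = (jn : ℕ∞) ∧ (jn : ℕ∞) ≤ τ ∧ ∃ i < c x, w x i jn = y}

/-- The activation time `AT_τ(x)` of the site `x` in the frog model with lifetime `τ`
and origin `o`. -/
noncomputable def AT {V : Type*} (o : V) (c : V → ℕ) (w : V → ℕ → ℕ → V) (τ : ℕ∞) (x : V) : ℕ∞ :=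
  ⨅ (m : ℕ) (seq : ℕ → V) (_ : seq 0 = o) (_ : seq m = x),
    ∑ i ∈ Finset.range m, ell c w τ (seq i) (seq (i + 1))

/-- The susceptibility `𝒮`: the least lifetime `τ ∈ ℕ` for which every site gets
activated before the process dies out. -/
noncomputable def susc {V : Type*} (o : V) (c : V → ℕ) (w : V → ℕ → ℕ → V) : ℕ∞ :=
  sInf {τ : ℕ∞ | ∃ tn : ℕ, τ = (tn : ℕ∞) ∧ ∀ x, AT o c w (tn : ℕ∞) x ≠ ⊤}

/-- The cover time `CT = max_x AT_∞(x)`. -/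
noncomputable def coverTime {V : Type*} (o : V) (c : V → ℕ) (w : V → ℕ → ℕ → V) : ℕ∞ :=
  ⨆ x, AT o c w ⊤ x

/-! ### The `d`-ary tree of depth `n` -/

/-- Vertices of the `d`-ary tree of depth `n`: a depth `k ≤ n` together with a word of
`k` child-indices describing the path from the root. -/
abbrev TV (d n : ℕ) := (k : Fin (n + 1)) × (Fin (k : ℕ) → Fin d)

/-- `x` is the parent of `y`. -/
def parentOf {d n : ℕ} (x y : TV d n) : Prop :=
  ∃ _h : (y.1 : ℕ) = (x.1 : ℕ) + 1, ∀ i : ℕ, ∀ hi : i < (x.1 : ℕ),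
    y.2 ⟨i, by omega⟩ = x.2 ⟨i, hi⟩

/-- The `d`-ary tree of depth `n`, as a simple graph. -/
def treeGraph (d n : ℕ) : SimpleGraph (TV d n) where
  Adj x y := parentOf x y ∨ parentOf y x
  symm := ⟨fun x y h => Or.symm h⟩
  loopless := ⟨fun x h => by rcases h with ⟨h1, _⟩ | ⟨h1, _⟩ <;> omega⟩

/-- The root `𝐫`. -/
def root (d n : ℕ) : TV d n := ⟨⟨0, Nat.succ_pos n⟩, fun i => i.elim0⟩

/-- `x` is a leaf, i.e. has depth `n`. -/
def isLeaf {d n : ℕ} (x : TV d n) : Prop := (x.1 : ℕ) = n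

/-- `‖x‖`, the distance from `x` to the leaf set. -/
def normV {d n : ℕ} (x : TV d n) : ℕ := n - (x.1 : ℕ)

/-- `x` is an ancestor of (or equal to) `y`; equivalently, `y` belongs to the induced
subtree `𝒯_x` consisting of `x` and its descendants. -/
def isAnc {d n : ℕ} (x y : TV d n) : Prop :=
  ∃ h : (x.1 : ℕ) ≤ (y.1 : ℕ), ∀ i : ℕ, ∀ hi : i < (x.1 : ℕ),
    y.2 ⟨i, lt_of_lt_of_le hi h⟩ = x.2 ⟨i, hi⟩

/-- `x` and `y` agree in their first `m` coordinates. -/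
def agreeUpTo {d n : ℕ} (x y : TV d n) (m : ℕ) : Prop :=
  ∃ (hx : m ≤ (x.1 : ℕ)) (hy : m ≤ (y.1 : ℕ)),
    ∀ i : ℕ, ∀ hi : i < m, x.2 ⟨i, lt_of_lt_of_le hi hx⟩ = y.2 ⟨i, lt_of_lt_of_le hi hy⟩

/-- The depth of `x ∧ y`, the common ancestor of `x` and `y` farthest from the root. -/
noncomputable def meetDepth {d n : ℕ} (x y : TV d n) : ℕ :=
  Nat.findGreatest (agreeUpTo x y) n

/-- `‖x ∧ y‖`, the distance from the common ancestor of `x,y` to the leaf set. -/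
noncomputable def meetNorm {d n : ℕ} (x y : TV d n) : ℕ := n - meetDepth x y

/-- The ancestor of `y` at depth `ℓ` (or `y` itself, if `ℓ` exceeds the depth of `y`). -/
def truncAnc {d n : ℕ} (y : TV d n) (ℓ : ℕ) : TV d n :=
  ⟨⟨min ℓ (y.1 : ℕ), lt_of_le_of_lt (min_le_right _ _) y.1.isLt⟩,
   fun i => y.2 ⟨(i : ℕ), lt_of_lt_of_le i.isLt (min_le_right ℓ (y.1 : ℕ))⟩⟩

/-- The number of vertices of an induced subtree rooted at a vertex of depth `ℓ`. -/
def subtreeCard (d n : ℕ) (ℓ : ℕ) : ℕ := ∑ j ∈ Finset.range (n - ℓ + 1), d ^ j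

/-- The root of `𝒯_y(m)`, the smallest induced subtree `𝒯_z` with `z` an ancestor of
(or equal to) `y` and `|𝒯_z| ≥ m`. -/
noncomputable def inducedRoot {d n : ℕ} (y : TV d n) (m : ℕ) : TV d n :=
  truncAnc y (Nat.findGreatest (fun ℓ => ℓ ≤ (y.1 : ℕ) ∧ m ≤ subtreeCard d n ℓ) n)

/-- `g(t) = t / log_d (d t)`. -/
noncomputable def gfun (d t : ℕ) : ℝ := (t : ℝ) / Real.logb d (d * t)

/-- `e_{a,b}(t) = Σ_{i=0}^t p^i(a,b)`. -/
noncomputable def esum {V : Type*} [Fintype V] (G : SimpleGraph V) (a b : V) (t : ℕ) : ℝ :=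
  ∑ i ∈ Finset.range (t + 1), pStep G i a b

/-- `max_{a,b ∈ B, a ≠ b} Pr_a [T_b < t]`. -/
noncomputable def maxHit {V : Type*} [Fintype V] (G : SimpleGraph V) (B : Finset V)
    (t : ℕ) : ℝ :=
  sSup {r : ℝ | ∃ a ∈ B, ∃ b ∈ B, a ≠ b ∧ r = walkProb G a t {γ | ∃ j < t, γ j = b}}

/-- `max_{a,b ∈ B, a ≠ b} e_{a,b}(t)`. -/
noncomputable def maxE {V : Type*} [Fintype V] (G : SimpleGraph V) (B : Finset V)
    (t : ℕ) : ℝ :=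
  sSup {r : ℝ | ∃ a ∈ B, ∃ b ∈ B, a ≠ b ∧ r = esum G a b t}


lemma step_nonneg (G : SimpleGraph V) (x y : V) : 0 ≤ step G x y := by
  unfold step; split <;> positivity

lemma step_row (G : SimpleGraph V) (x : V) : ∑ y, step G x y ≤ 1 := by
  unfold step
  rw [Finset.sum_ite, Finset.sum_const_zero, add_zero, Finset.sum_const]
  simp only [nsmul_eq_mul]
  rw [show (Finset.univ.filter fun y => G.Adj x y).card = deg G x from rfl]
  rcases Nat.eq_zero_or_pos (deg G x) with h | h
  · simp [h]
  · rw [mul_one_div, div_self (by positivity)]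

lemma deg_pos_of_adj {G : SimpleGraph V} {x y : V} (h : G.Adj x y) : 0 < deg G x :=
  Finset.card_pos.2 ⟨y, by simp [h]⟩

lemma step_rev (G : SimpleGraph V) (x y : V) :
    (deg G x : ℝ) * step G x y = (deg G y : ℝ) * step G y x := by
  unfold step
  by_cases h : G.Adj x y
  · rw [if_pos h, if_pos h.symm, mul_one_div, mul_one_div,
      div_self (by exact_mod_cast (deg_pos_of_adj h).ne'),
      div_self (by exact_mod_cast (deg_pos_of_adj h.symm).ne')]
  · rw [if_neg h, if_neg (fun hc => h hc.symm), mul_zero, mul_zero]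

lemma chainProb_nonneg {S : Type*} [Fintype S] (K : S → S → ℝ) (hK : ∀ x y, 0 ≤ K x y)
    (x : S) (t : ℕ) (E : Set (ℕ → S)) : 0 ≤ chainProb K x t E := by
  apply Finset.sum_nonneg; intro ω _
  split
  · exact Finset.prod_nonneg fun i _ => hK _ _
  · exact le_rfl

lemma extp_le {S : Type*} {t : ℕ} (γ : Fin (t + 1) → S) (i : ℕ) (hi : i ≤ t) :
    extp γ i = γ ⟨i, by omega⟩ := by
  unfold extp; congr 1; exact Fin.ext (by simpa using hi)

lemma extp_snoc {S : Type*} {t : ℕ} (ρ : Fin (t + 1) → S) (v : S) (i : ℕ) (hi : i ≤ t) :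
    extp (Fin.snoc ρ v) i = extp ρ i := by
  rw [extp_le (Fin.snoc ρ v) i (le_trans hi (Nat.le_succ t)), extp_le ρ i hi]
  have hcast : (⟨i, by omega⟩ : Fin (t+2)) = Fin.castSucc ⟨i, by omega⟩ := rfl
  rw [hcast, Fin.snoc_castSucc]

lemma extp_snoc_top {S : Type*} {t : ℕ} (ρ : Fin (t + 1) → S) (v : S) :
    extp (Fin.snoc ρ v) (t + 1) = v := by
  rw [extp_le (Fin.snoc ρ v) (t+1) le_rfl]
  exact Fin.snoc_last (α := fun _ => S) v ρ

lemma extp_zero {S : Type*} {t : ℕ} (γ : Fin (t + 1) → S) : extp γ 0 = γ 0 := by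
  rw [extp_le γ 0 (Nat.zero_le t)]
  congr 1

lemma chainProb_succ_le {S : Type*} [Fintype S] (K : S → S → ℝ) (hK : ∀ x y, 0 ≤ K x y)
    (hrow : ∀ x, ∑ y, K x y ≤ 1) (x : S) (t : ℕ) (E : Set (ℕ → S))
    (hE : ∀ γ γ' : ℕ → S, (∀ i, i ≤ t → γ i = γ' i) → γ ∈ E → γ' ∈ E) :
    chainProb K x (t + 1) E ≤ chainProb K x t E := by
  have hbij : Function.Bijective (fun p : (Fin (t+1) → S) × S => (Fin.snoc p.1 p.2 : Fin (t+2) → S)) := by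
    constructor
    · rintro ⟨ρ, v⟩ ⟨ρ', v'⟩ h
      simp only [Prod.mk.injEq]
      constructor
      · funext j
        have := congrFun h (Fin.castSucc j)
        simpa using this
      · have := congrFun h (Fin.last (t+1))
        simpa using this
    · intro ω
      exact ⟨⟨Fin.init ω, ω (Fin.last (t+1))⟩, Fin.snoc_init_self ω⟩
  have hsum := Fintype.sum_bijective _ hbij
    (fun p : (Fin (t+1) → S) × S =>
      if (Fin.snoc p.1 p.2 : Fin (t+2) → S) 0 = x ∧ extp (Fin.snoc p.1 p.2 : Fin (t+2) → S) ∈ E then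
        ∏ i ∈ Finset.range (t+1), K (extp (Fin.snoc p.1 p.2 : Fin (t+2) → S) i)
          (extp (Fin.snoc p.1 p.2 : Fin (t+2) → S) (i+1)) else 0)
    (fun ω : Fin (t+2) → S =>
      if ω 0 = x ∧ extp ω ∈ E then
        ∏ i ∈ Finset.range (t+1), K (extp ω i) (extp ω (i+1)) else 0)
    (fun p => rfl)
  rw [chainProb, chainProb, ← hsum, Fintype.sum_prod_type]
  refine Finset.sum_le_sum (fun ρ _ => ?_)
  have hcond : ∀ v : S, (((Fin.snoc ρ v : Fin (t+2) → S) 0 = x ∧ extp (Fin.snoc ρ v : Fin (t+2) → S) ∈ E)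
      ↔ (ρ 0 = x ∧ extp ρ ∈ E)) := by
    intro v
    have h0 : (Fin.snoc ρ v : Fin (t+2) → S) 0 = ρ 0 := by
      have h := extp_snoc ρ v 0 (Nat.zero_le t)
      rwa [extp_zero, extp_zero] at h
    constructor
    · rintro ⟨h1, h2⟩
      exact ⟨h0 ▸ h1, hE _ _ (fun i hi => extp_snoc ρ v i hi) h2⟩
    · rintro ⟨h1, h2⟩
      exact ⟨h0 ▸ h1, hE _ _ (fun i hi => (extp_snoc ρ v i hi).symm) h2⟩
  have hprod : ∀ v : S,
      (∏ i ∈ Finset.range (t+1), K (extp (Fin.snoc ρ v : Fin (t+2) → S) i)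
        (extp (Fin.snoc ρ v : Fin (t+2) → S) (i+1)))
      = (∏ i ∈ Finset.range t, K (extp ρ i) (extp ρ (i+1))) * K (extp ρ t) v := by
    intro v
    rw [Finset.prod_range_succ]
    congr 1
    · refine Finset.prod_congr rfl (fun i hi => ?_)
      have hi' : i < t := Finset.mem_range.1 hi
      rw [extp_snoc ρ v i (by omega), extp_snoc ρ v (i+1) (by omega)]
    · rw [extp_snoc ρ v t le_rfl, extp_snoc_top]
  simp only [hcond, hprod]
  by_cases hc : ρ 0 = x ∧ extp ρ ∈ E
  · simp only [if_pos hc]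
    rw [← Finset.mul_sum]
    exact mul_le_of_le_one_right (Finset.prod_nonneg fun i _ => hK _ _) (hrow _)
  · simp only [if_neg hc, Finset.sum_const_zero]
    exact le_rfl

lemma chainProb_le_of_le {S : Type*} [Fintype S] (K : S → S → ℝ) (hK : ∀ x y, 0 ≤ K x y)
    (hrow : ∀ x, ∑ y, K x y ≤ 1) (x : S) {j t : ℕ} (hjt : j ≤ t) (E : Set (ℕ → S))
    (hE : ∀ γ γ' : ℕ → S, (∀ i, i ≤ j → γ i = γ' i) → γ ∈ E → γ' ∈ E) :
    chainProb K x t E ≤ chainProb K x j E := by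
  induction t with
  | zero =>
      have : j = 0 := Nat.le_zero.1 hjt
      subst this; exact le_rfl
  | succ t ih =>
      rcases Nat.lt_or_ge j (t+1) with h | h
      · have h1 : chainProb K x (t+1) E ≤ chainProb K x t E :=
          chainProb_succ_le K hK hrow x t E
            (fun γ γ' hag => hE γ γ' (fun i hi => hag i (by omega)))
        exact h1.trans (ih (by omega))
      · have : j = t + 1 := le_antisymm hjt h
        subst this; exact le_rfl

lemma chainProb_univ_le_one {S : Type*} [Fintype S] (K : S → S → ℝ) (hK : ∀ x y, 0 ≤ K x y)
    (hrow : ∀ x, ∑ y, K x y ≤ 1) (x : S) (t : ℕ) : chainProb K x t Set.univ ≤ 1 := by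
  have h0 : chainProb K x 0 Set.univ = 1 := by
    unfold chainProb
    simp only [Finset.range_zero, Finset.prod_empty, Set.mem_univ, and_true]
    rw [← Fintype.sum_equiv ((Equiv.funUnique (Fin 1) S).symm)
      (fun v : S => if v = x then (1:ℝ) else 0)
      (fun ω : Fin 1 → S => if ω 0 = x then (1:ℝ) else 0) (fun v => rfl)]
    simp
  calc chainProb K x t Set.univ ≤ chainProb K x 0 Set.univ :=
        chainProb_le_of_le K hK hrow x (Nat.zero_le t) Set.univ (fun _ _ _ h => h)
    _ = 1 := h0

lemma pStep_nonneg (G : SimpleGraph V) (t : ℕ) (u v : V) : 0 ≤ pStep G t u v :=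
  chainProb_nonneg _ (step_nonneg G) _ _ _

lemma esum_nonneg (G : SimpleGraph V) (a b : V) (t : ℕ) : 0 ≤ esum G a b t :=
  Finset.sum_nonneg fun i _ => pStep_nonneg G i a b

lemma pStep_zero (G : SimpleGraph V) (u v : V) : pStep G 0 u v = if u = v then 1 else 0 := by
  unfold pStep walkProb chainProb
  simp only [Finset.range_zero, Finset.prod_empty]
  have hstep : ∀ ω : Fin 1 → V,
      (if ω 0 = u ∧ extp ω ∈ {γ : ℕ → V | γ 0 = v} then (1:ℝ) else 0)
      = (if ω 0 = u ∧ ω 0 = v then (1:ℝ) else 0) := by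
    intro ω
    have h : extp ω ∈ {γ : ℕ → V | γ 0 = v} ↔ ω 0 = v := by
      rw [Set.mem_setOf_eq, extp_zero]
    simp [h]
  rw [Finset.sum_congr rfl (fun ω _ => hstep ω)]
  have hd : (default : Fin 1) = 0 := Subsingleton.elim _ _
  rw [Fintype.sum_equiv (Equiv.funUnique (Fin 1) V)
    (fun ω : Fin 1 → V => if ω 0 = u ∧ ω 0 = v then (1:ℝ) else 0)
    (fun w : V => if w = u ∧ w = v then (1:ℝ) else 0)
    (fun ω => by show _ = (if ω default = u ∧ ω default = v then (1:ℝ) else 0); rw [hd])]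
  by_cases huv : u = v
  · subst huv; simp
  · rw [if_neg huv]
    refine Finset.sum_eq_zero (fun w _ => ?_)
    rw [if_neg]; rintro ⟨rfl, rfl⟩; exact huv rfl

lemma sum_pStep_le_one (G : SimpleGraph V) (t : ℕ) (u : V) : ∑ v, pStep G t u v ≤ 1 := by
  have heq : ∑ v, pStep G t u v = chainProb (step G) u t Set.univ := by
    unfold pStep walkProb chainProb
    rw [Finset.sum_comm]
    refine Finset.sum_congr rfl (fun ω _ => ?_)
    simp only [Set.mem_setOf_eq, Set.mem_univ, and_true]
    by_cases h : ω 0 = u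
    · simp only [h, true_and]
      rw [Finset.sum_ite_eq Finset.univ (extp ω t)
        (fun _ => ∏ i ∈ Finset.range t, step G (extp ω i) (extp ω (i + 1)))]
      simp
    · simp [h]
  rw [heq]
  exact chainProb_univ_le_one _ (step_nonneg G) (step_row G) u t

lemma walkProb_hit_le (G : SimpleGraph V) (a b : V) (t : ℕ) :
    walkProb G a t {γ | ∃ j < t, γ j = b} ≤ ∑ j ∈ Finset.range t, pStep G j a b := by
  have h1 : walkProb G a t {γ | ∃ j < t, γ j = b}
      ≤ ∑ j ∈ Finset.range t, walkProb G a t {γ | γ j = b} := by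
    unfold walkProb chainProb
    rw [Finset.sum_comm]
    refine Finset.sum_le_sum (fun ω _ => ?_)
    by_cases h : ω 0 = a ∧ extp ω ∈ {γ : ℕ → V | ∃ j < t, γ j = b}
    · obtain ⟨h0, j0, hj0, hb⟩ := h
      rw [if_pos ⟨h0, j0, hj0, hb⟩]
      have heq : (if ω 0 = a ∧ extp ω ∈ {γ : ℕ → V | γ j0 = b} then
          ∏ i ∈ Finset.range t, step G (extp ω i) (extp ω (i + 1)) else (0:ℝ))
          = ∏ i ∈ Finset.range t, step G (extp ω i) (extp ω (i + 1)) := if_pos ⟨h0, hb⟩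
      conv_lhs => rw [← heq]
      refine Finset.single_le_sum
        (f := fun j => if ω 0 = a ∧ extp ω ∈ {γ : ℕ → V | γ j = b} then
          ∏ i ∈ Finset.range t, step G (extp ω i) (extp ω (i + 1)) else 0)
        (fun j _ => ?_) (Finset.mem_range.2 hj0)
      split
      · exact Finset.prod_nonneg fun i _ => step_nonneg G _ _
      · exact le_rfl
    · rw [if_neg h]
      refine Finset.sum_nonneg (fun j _ => ?_)
      split
      · exact Finset.prod_nonneg fun i _ => step_nonneg G _ _
      · exact le_rfl
  refine h1.trans (Finset.sum_le_sum (fun j hj => ?_))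
  exact chainProb_le_of_le (step G) (step_nonneg G) (step_row G) a
    (le_of_lt (Finset.mem_range.1 hj)) _
    (fun γ γ' hag h => by
      have := hag j le_rfl
      simp only [Set.mem_setOf_eq] at h ⊢
      rw [← this]; exact h)

lemma sum_esum_le (G : SimpleGraph V) (a : V) (t : ℕ) :
    ∑ b ∈ Finset.univ.erase a, esum G a b t ≤ t := by
  unfold esum
  rw [Finset.sum_comm]
  have key : ∀ i ∈ Finset.range (t+1),
      (∑ b ∈ Finset.univ.erase a, pStep G i a b) ≤ (if i = 0 then 0 else 1) := by
    intro i _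
    rcases Nat.eq_zero_or_pos i with rfl | hi
    · simp only [if_pos rfl]
      refine le_of_eq (Finset.sum_eq_zero (fun b hb => ?_))
      rw [pStep_zero, if_neg]
      exact fun h => (Finset.mem_erase.1 hb).1 h.symm
    · rw [if_neg (by omega)]
      calc ∑ b ∈ Finset.univ.erase a, pStep G i a b
          ≤ ∑ b, pStep G i a b :=
            Finset.sum_le_sum_of_subset_of_nonneg (Finset.subset_univ _)
              (fun b _ _ => pStep_nonneg G i a b)
        _ ≤ 1 := sum_pStep_le_one G i a
  calc ∑ i ∈ Finset.range (t+1), ∑ b ∈ Finset.univ.erase a, pStep G i a b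
      ≤ ∑ i ∈ Finset.range (t+1), (if i = 0 then (0:ℝ) else 1) := Finset.sum_le_sum key
    _ = t := by
        rw [Finset.sum_range_succ']
        simp

lemma weight_rev (G : SimpleGraph V) : ∀ (i : ℕ) (γ : ℕ → V),
    (deg G (γ 0) : ℝ) * ∏ k ∈ Finset.range i, step G (γ k) (γ (k+1))
    = (deg G (γ i) : ℝ) * ∏ k ∈ Finset.range i, step G (γ (i - k)) (γ (i - (k+1))) := by
  intro i
  induction i with
  | zero => intro γ; simp
  | succ i ih =>
    intro γ
    calc (deg G (γ 0) : ℝ) * ∏ k ∈ Finset.range (i+1), step G (γ k) (γ (k+1))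
        = ((deg G (γ 0) : ℝ) * ∏ k ∈ Finset.range i, step G (γ k) (γ (k+1)))
            * step G (γ i) (γ (i+1)) := by rw [Finset.prod_range_succ, mul_assoc]
      _ = ((deg G (γ i) : ℝ) * ∏ k ∈ Finset.range i, step G (γ (i-k)) (γ (i-(k+1))))
            * step G (γ i) (γ (i+1)) := by rw [ih γ]
      _ = (∏ k ∈ Finset.range i, step G (γ (i-k)) (γ (i-(k+1))))
            * ((deg G (γ i) : ℝ) * step G (γ i) (γ (i+1))) := by ring
      _ = (∏ k ∈ Finset.range i, step G (γ (i-k)) (γ (i-(k+1))))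
            * ((deg G (γ (i+1)) : ℝ) * step G (γ (i+1)) (γ i)) := by rw [step_rev]
      _ = (deg G (γ (i+1)) : ℝ) * ∏ k ∈ Finset.range (i+1), step G (γ (i+1-k)) (γ (i+1-(k+1))) := by
            rw [Finset.prod_range_succ']
            simp only [Nat.succ_sub_succ, Nat.sub_zero]
            ring

def revF {S : Type*} {i : ℕ} (ω : Fin (i+1) → S) : Fin (i+1) → S :=
  fun k => ω ⟨i - (k : ℕ), by omega⟩

lemma revF_invol {S : Type*} {i : ℕ} : Function.Involutive (revF (S := S) (i := i)) := by
  intro ω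
  funext k
  show ω ⟨i - (i - (k:ℕ)), by omega⟩ = ω k
  congr 1
  exact Fin.ext (by have := k.isLt; simp only []; omega)

lemma extp_revF {S : Type*} {i : ℕ} (ω : Fin (i+1) → S) (m : ℕ) (hm : m ≤ i) :
    extp (revF ω) m = extp ω (i - m) := by
  rw [extp_le _ m hm, extp_le ω (i-m) (Nat.sub_le i m)]
  rfl

lemma pStep_rev (G : SimpleGraph V) (i : ℕ) (a b : V) :
    (deg G a : ℝ) * pStep G i a b = (deg G b : ℝ) * pStep G i b a := by
  unfold pStep walkProb chainProb
  rw [Finset.mul_sum, Finset.mul_sum]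
  refine Fintype.sum_bijective revF revF_invol.bijective _ _ (fun ω => ?_)
  simp only [Set.mem_setOf_eq]
  have hlast : extp (revF ω) i = ω 0 := by
    rw [extp_revF ω i le_rfl, Nat.sub_self, extp_zero]
  have hzero : revF ω 0 = extp ω i := by
    rw [← extp_zero (revF ω), extp_revF ω 0 (Nat.zero_le i), Nat.sub_zero]
  by_cases hc : ω 0 = a ∧ extp ω i = b
  · obtain ⟨h0, hi⟩ := hc
    rw [if_pos ⟨h0, hi⟩, if_pos ⟨by rw [hzero, hi], by rw [hlast, h0]⟩]
    have hγ := weight_rev G i (extp ω)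
    rw [extp_zero] at hγ
    rw [h0] at hγ
    rw [hi] at hγ
    rw [hγ]
    congr 1
    refine Finset.prod_congr rfl (fun k hk => ?_)
    have hk' : k < i := Finset.mem_range.1 hk
    rw [extp_revF ω k (by omega), extp_revF ω (k+1) (by omega)]
  · have hnc : ¬(revF ω 0 = b ∧ extp (revF ω) i = a) := by
      rintro ⟨h1, h2⟩
      exact hc ⟨by rw [← hlast, h2], by rw [← hzero, h1]⟩
    rw [if_neg hc, if_neg hnc, mul_zero, mul_zero]

lemma pStep_eq_zero_of_deg_zero (G : SimpleGraph V) {a : V} (h : deg G a = 0) (i : ℕ) (b : V) :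
    pStep G (i+1) a b = 0 := by
  unfold pStep walkProb chainProb
  refine Finset.sum_eq_zero (fun ω _ => ?_)
  by_cases hc : ω 0 = a ∧ extp ω ∈ {γ : ℕ → V | γ (i+1) = b}
  · rw [if_pos hc]
    refine Finset.prod_eq_zero (Finset.mem_range.2 (Nat.succ_pos i)) ?_
    rw [extp_zero, hc.1]
    unfold step
    rw [if_neg]
    intro hadj
    have := deg_pos_of_adj hadj
    omega
  · rw [if_neg hc]

lemma pStep_symm (G : SimpleGraph V) {a b : V} (hdeg : deg G a = deg G b) (i : ℕ) :
    pStep G i a b = pStep G i b a := by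
  rcases Nat.eq_zero_or_pos (deg G a) with h | h
  · cases i with
    | zero => rw [pStep_zero, pStep_zero]; simp [eq_comm]
    | succ i =>
        rw [pStep_eq_zero_of_deg_zero G h, pStep_eq_zero_of_deg_zero G (hdeg ▸ h)]
  · have hr := pStep_rev G i a b
    rw [hdeg] at hr
    have hb : (deg G b : ℝ) ≠ 0 := by
      have : 0 < deg G b := hdeg ▸ h
      exact_mod_cast this.ne'
    exact mul_left_cancel₀ hb hr

lemma esum_symm (G : SimpleGraph V) {a b : V} (hdeg : deg G a = deg G b) (t : ℕ) :
    esum G a b t = esum G b a t :=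
  Finset.sum_congr rfl (fun i _ => pStep_symm G hdeg i)

lemma walkProb_hit_le_esum (G : SimpleGraph V) (a b : V) (t : ℕ) :
    walkProb G a t {γ | ∃ j < t, γ j = b} ≤ esum G a b t := by
  refine (walkProb_hit_le G a b t).trans ?_
  unfold esum
  exact Finset.sum_le_sum_of_subset_of_nonneg
    (Finset.range_subset_range.2 (Nat.le_succ t)) (fun i _ _ => pStep_nonneg G i a b)

lemma greedy {α : Type*} (R : α → α → Prop) (D : ℕ) :
    ∀ A : Finset α, (∀ a ∈ A, ∀ b ∈ A, R a b → R b a) →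
      (∀ a ∈ A, (A.filter fun b => b ≠ a ∧ R a b).card ≤ D) →
      ∃ B, B ⊆ A ∧ A.card ≤ (D + 1) * B.card ∧ ∀ a ∈ B, ∀ b ∈ B, a ≠ b → ¬ R a b := by
  intro A
  induction A using Finset.strongInduction with
  | _ A ih =>
    intro hsym hdeg
    rcases A.eq_empty_or_nonempty with rfl | ⟨a, ha⟩
    · exact ⟨∅, Finset.Subset.refl _, by simp, by simp⟩
    · set A' := (A.erase a).filter (fun b => ¬ R a b) with hA'
      have hA'A : A' ⊆ A := (Finset.filter_subset _ _).trans (Finset.erase_subset _ _)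
      have haA' : a ∉ A' := fun h => (Finset.mem_erase.1 (Finset.mem_filter.1 h).1).1 rfl
      have hss : A' ⊂ A := (Finset.ssubset_iff_of_subset hA'A).2 ⟨a, ha, haA'⟩
      obtain ⟨B', hB'A', hcard, hind⟩ := ih A' hss
        (fun x hx y hy => hsym x (hA'A hx) y (hA'A hy))
        (fun x hx => le_trans
          (Finset.card_le_card (Finset.filter_subset_filter _ hA'A)) (hdeg x (hA'A hx)))
      have hnotmem : a ∉ B' := fun h => haA' (hB'A' h)
      refine ⟨insert a B', Finset.insert_subset ha (hB'A'.trans hA'A), ?_, ?_⟩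
      · rw [Finset.card_insert_of_notMem hnotmem]
        have hdiff : A \ A' ⊆ insert a (A.filter fun b => b ≠ a ∧ R a b) := by
          intro b hb
          obtain ⟨hbA, hbA'⟩ := Finset.mem_sdiff.1 hb
          by_cases hba : b = a
          · subst hba; exact Finset.mem_insert_self _ _
          · refine Finset.mem_insert_of_mem (Finset.mem_filter.2 ⟨hbA, hba, ?_⟩)
            by_contra hR
            exact hbA' (Finset.mem_filter.2 ⟨Finset.mem_erase.2 ⟨hba, hbA⟩, hR⟩)
        have h1 : (A \ A').card ≤ D + 1 := by
          calc (A \ A').card ≤ (insert a (A.filter fun b => b ≠ a ∧ R a b)).card :=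
                Finset.card_le_card hdiff
            _ ≤ (A.filter fun b => b ≠ a ∧ R a b).card + 1 := Finset.card_insert_le _ _
            _ ≤ D + 1 := by have := hdeg a ha; omega
        have h2 := Finset.card_sdiff_add_card_eq_card hA'A
        have h3 : A.card ≤ A'.card + (D + 1) := by omega
        calc A.card ≤ A'.card + (D+1) := h3
          _ ≤ (D+1) * B'.card + (D+1) := by omega
          _ = (D+1) * (B'.card + 1) := by ring
      · intro x hx y hy hxy
        rcases Finset.mem_insert.1 hx with rfl | hx' <;>
          rcases Finset.mem_insert.1 hy with rfl | hy'
        · exact absurd rfl hxy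
        · exact (Finset.mem_filter.1 (hB'A' hy')).2
        · intro hR
          exact (Finset.mem_filter.1 (hB'A' hx')).2 (hsym x (hA'A (hB'A' hx')) y ha hR)
        · exact hind x hx' y hy' hxy

lemma master (G : SimpleGraph V) (A : Finset V)
    (hdeg : ∀ a ∈ A, ∀ b ∈ A, deg G a = deg G b)
    (s : ℝ) (hs : 0 < s) (t : ℕ) (ht : 0 < t) :
    ∃ B : Finset V, B ⊆ A ∧ (A.card : ℝ) / (1 + s * (t : ℝ) ^ 2) ≤ (B.card : ℝ) ∧
      maxHit G B t ≤ maxE G B t ∧ maxE G B t < 1 / (s * t) := by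
  have hst : (0:ℝ) < s * t := by positivity
  set D := ⌊s * (t:ℝ)^2⌋₊ with hD
  have hdegbd : ∀ a ∈ A, (A.filter fun b => b ≠ a ∧ (1/(s*t) ≤ esum G a b t)).card ≤ D := by
    intro a ha
    set N := A.filter fun b => b ≠ a ∧ (1/(s*t) ≤ esum G a b t) with hN
    have hsub : N ⊆ Finset.univ.erase a := fun b hb =>
      Finset.mem_erase.2 ⟨(Finset.mem_filter.1 hb).2.1, Finset.mem_univ b⟩
    have h1 : (N.card : ℝ) * (1/(s*t)) ≤ ∑ b ∈ N, esum G a b t := by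
      calc (N.card : ℝ) * (1/(s*t)) = ∑ _b ∈ N, 1/(s*t) := by
            rw [Finset.sum_const, nsmul_eq_mul]
        _ ≤ ∑ b ∈ N, esum G a b t :=
            Finset.sum_le_sum (fun b hb => (Finset.mem_filter.1 hb).2.2)
    have h2 : ∑ b ∈ N, esum G a b t ≤ ∑ b ∈ Finset.univ.erase a, esum G a b t :=
      Finset.sum_le_sum_of_subset_of_nonneg hsub (fun b _ _ => esum_nonneg G a b t)
    have h3 : (N.card : ℝ) * (1/(s*t)) ≤ t := le_trans h1 (le_trans h2 (sum_esum_le G a t))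
    rw [mul_one_div, div_le_iff₀ hst] at h3
    have h4 : (N.card : ℝ) ≤ s * (t:ℝ)^2 := by
      calc (N.card : ℝ) ≤ t * (s * t) := h3
        _ = s * (t:ℝ)^2 := by ring
    exact Nat.le_floor h4
  obtain ⟨B, hBA, hcard, hind⟩ := greedy (fun a b => 1/(s*t) ≤ esum G a b t) D A
    (fun a ha b hb hR => by
      show 1/(s*t) ≤ esum G b a t
      rw [esum_symm G (hdeg b hb a ha) t]; exact hR)
    hdegbd
  have hpos : (0:ℝ) < 1 + s * (t:ℝ)^2 := by positivity
  refine ⟨B, hBA, ?_, ?_, ?_⟩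
  · have hDle : (D:ℝ) ≤ s * (t:ℝ)^2 := Nat.floor_le (by positivity)
    have hc : (A.card:ℝ) ≤ ((D:ℝ)+1) * B.card := by exact_mod_cast hcard
    rw [div_le_iff₀ hpos]
    have hBnn : (0:ℝ) ≤ (B.card:ℝ) := Nat.cast_nonneg _
    nlinarith [mul_le_mul_of_nonneg_right hDle hBnn]
  · -- maxHit ≤ maxE
    have hfinE : {r : ℝ | ∃ a ∈ B, ∃ b ∈ B, a ≠ b ∧ r = esum G a b t}.Finite := by
      apply Set.Finite.subset (Set.finite_range (fun p : V × V => esum G p.1 p.2 t))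
      rintro r ⟨a, _, b, _, _, rfl⟩
      exact ⟨(a, b), rfl⟩
    have hEnn : 0 ≤ maxE G B t := by
      rcases Set.eq_empty_or_nonempty
          {r : ℝ | ∃ a ∈ B, ∃ b ∈ B, a ≠ b ∧ r = esum G a b t} with he | hne
      · rw [maxE, he, Real.sSup_empty]
      · obtain ⟨r, hr⟩ := hne
        obtain ⟨a, ha, b, hb, hab, hre⟩ := hr
        have : r ≤ maxE G B t := le_csSup hfinE.bddAbove ⟨a, ha, b, hb, hab, hre⟩
        have hrnn : 0 ≤ r := hre ▸ esum_nonneg G a b t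
        linarith
    rw [maxHit]
    refine Real.sSup_le (fun r hr => ?_) hEnn
    obtain ⟨a, ha, b, hb, hab, rfl⟩ := hr
    refine le_trans (walkProb_hit_le_esum G a b t) ?_
    exact le_csSup hfinE.bddAbove ⟨a, ha, b, hb, hab, rfl⟩
  · -- maxE < 1/(s t)
    have hfinE : {r : ℝ | ∃ a ∈ B, ∃ b ∈ B, a ≠ b ∧ r = esum G a b t}.Finite := by
      apply Set.Finite.subset (Set.finite_range (fun p : V × V => esum G p.1 p.2 t))
      rintro r ⟨a, _, b, _, _, rfl⟩
      exact ⟨(a, b), rfl⟩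
    rcases Set.eq_empty_or_nonempty
        {r : ℝ | ∃ a ∈ B, ∃ b ∈ B, a ≠ b ∧ r = esum G a b t} with he | hne
    · rw [maxE, he, Real.sSup_empty]
      positivity
    · rw [maxE]
      have hmem := hne.csSup_mem hfinE
      obtain ⟨a, ha, b, hb, hab, heq⟩ := hmem
      rw [heq]
      exact lt_of_not_ge (hind a ha b hb hab)

lemma tv_zero_eq {d : ℕ} (a b : TV d 0) : a = b := by
  obtain ⟨⟨k, hk⟩, f⟩ := a
  obtain ⟨⟨l, hl⟩, g⟩ := b
  have hk0 : k = 0 := by omega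
  have hl0 : l = 0 := by omega
  subst hk0; subst hl0
  have hfg : f = g := funext fun i => absurd i.isLt (Nat.not_lt_zero _)
  cases hfg; rfl

lemma leaf_deg {d n : ℕ} (hn : 0 < n) (a : TV d n) (ha : isLeaf a) :
    deg (treeGraph d n) a = 1 := by
  unfold isLeaf at ha
  unfold deg
  rw [Finset.card_eq_one]
  refine ⟨⟨⟨n-1, by omega⟩, fun i => a.2 ⟨(i:ℕ), by have := i.isLt; omega⟩⟩, ?_⟩
  ext y
  simp only [Finset.mem_filter, Finset.mem_univ, true_and, Finset.mem_singleton]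
  constructor
  · intro hadj
    rcases (hadj : parentOf a y ∨ parentOf y a) with h | h
    · obtain ⟨h1, _⟩ := h
      exfalso
      have := y.1.isLt
      omega
    · obtain ⟨h1, h2⟩ := h
      obtain ⟨⟨m, hm⟩, g⟩ := y
      simp only at h1 h2 ⊢
      have hmn : m = n - 1 := by omega
      subst hmn
      congr 1
      refine funext fun i => ?_
      exact (h2 (i:ℕ) i.isLt).symm
  · intro hy
    subst hy
    show parentOf _ _ ∨ parentOf _ _
    right
    refine ⟨by simp only []; omega, fun i hi => rfl⟩

/-- Let either `G = (V,E)` be a finite connected regular simple graph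
and `A ⊆ V`, or `G = 𝒯_{d,n}` and `A ⊆ ℒ`.  Then for every `s > 0` and every `t ∈ ℕ`
(with `ℕ = {1,2,…}` as in the paper) there exists `B_s ⊆ A` with
`|B_s| ≥ |A| / (1 + s t²)` and
`max_{a,b ∈ B_s, a≠b} Pr_a[T_b < t] ≤ max_{a,b ∈ B_s, a≠b} e_{a,b}(t) < 1/(s t)`. -/
theorem statement8 :
    (∀ (V : Type*) [Fintype V],
      ∀ G : SimpleGraph V, G.Connected → (∃ r : ℕ, ∀ v, deg G v = r) →
        ∀ A : Finset V, ∀ s : ℝ, 0 < s → ∀ t : ℕ, 0 < t →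
          ∃ B : Finset V, B ⊆ A ∧
            (A.card : ℝ) / (1 + s * (t : ℝ) ^ 2) ≤ (B.card : ℝ) ∧
            maxHit G B t ≤ maxE G B t ∧ maxE G B t < 1 / (s * t)) ∧
    (∀ d n : ℕ, 2 ≤ d →
      ∀ A : Finset (TV d n), (∀ a ∈ A, isLeaf a) → ∀ s : ℝ, 0 < s → ∀ t : ℕ, 0 < t →
        ∃ B : Finset (TV d n), B ⊆ A ∧
          (A.card : ℝ) / (1 + s * (t : ℝ) ^ 2) ≤ (B.card : ℝ) ∧
          maxHit (treeGraph d n) B t ≤ maxE (treeGraph d n) B t ∧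
          maxE (treeGraph d n) B t < 1 / (s * t)) := by
  constructor
  · intro V _ G _ hreg A s hs t ht
    obtain ⟨r, hr⟩ := hreg
    exact master G A (fun a _ b _ => (hr a).trans (hr b).symm) s hs t ht
  · intro d n _ A hA s hs t ht
    refine master (treeGraph d n) A ?_ s hs t ht
    intro a ha b hb
    rcases Nat.eq_zero_or_pos n with rfl | hn
    · rw [tv_zero_eq a b]
    · rw [leaf_deg hn a (hA a ha), leaf_deg hn b (hA b hb)]

end FrogFormal
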